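/- If P is a poset with at least two elements having the Unique Cover Twin Property, then every induced-P-saturated family in B_n (n ≥ 3) separates every pair of points of [n], and hence has size at least ⌈log₂ n⌉. -/

import Mathlib

/-- `S` separates `x` and `y`: exactly one of `x, y` belongs to `S`. -/
def Separates {n : ℕ} (S : Finset (Fin n)) (x y : Fin n) : Prop :=
  (x ∈ S ∧ y ∉ S) ∨ (y ∈ S ∧ x ∉ S)

/-- A poset has the Unique Cover Twin Property if every element with precisely
one cover `T` shares that cover with some other element. -/
def UCTP (P : Type*) [PartialOrder P] : Prop :=
  ∀ S T : P, S ⋖ T → (∀ T', S ⋖ T' → T' = T) → ∃ S', S' ≠ S ∧ S' ⋖ T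

/-- `F` contains an induced copy of the poset `P`. -/
def InducedCopy {n : ℕ} (P : Type*) [PartialOrder P] (F : Finset (Finset (Fin n))) : Prop :=
  ∃ f : P → Finset (Fin n), Function.Injective f ∧ (∀ p, f p ∈ F) ∧
    ∀ a b : P, a ≤ b ↔ f a ⊆ f b

/-- `F` is induced-`P`-saturated in `B_n`. -/
def InducedSaturated {n : ℕ} (P : Type*) [PartialOrder P]
    (F : Finset (Finset (Fin n))) : Prop :=
  ¬ InducedCopy P F ∧ ∀ S ∉ F, InducedCopy P (insert S F)

/-- If `P` is a poset with at least two elements having the UCTP, then every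
induced-`P`-saturated family in `B_n` (`n ≥ 3`) separates every pair of points
of `[n]`, and hence has size at least `⌈log₂ n⌉`. -/
theorem stmt17 {n : ℕ} (hn : 3 ≤ n) (P : Type*) [PartialOrder P] [Fintype P]
    [Nontrivial P] (hP : UCTP P) (F : Finset (Finset (Fin n)))
    (hF : InducedSaturated P F) :
    (∀ x y : Fin n, x ≠ y → ∃ S ∈ F, Separates S x y) ∧
    Nat.clog 2 n ≤ F.card := by
  classical
  obtain ⟨hno, hsat⟩ := hF
  -- Any set outside F can be placed in a copy whose other members lie in F.
  have hins : ∀ S : Finset (Fin n), S ∉ F →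
      ∃ (f : P → Finset (Fin n)) (p : P), Function.Injective f ∧
        (∀ a b : P, a ≤ b ↔ f a ⊆ f b) ∧ f p = S ∧ ∀ q, q ≠ p → f q ∈ F := by
    intro S hS
    obtain ⟨f, hinj, hmem, hiff⟩ := hsat S hS
    by_cases hp : ∃ p, f p = S
    · obtain ⟨p, hp⟩ := hp
      refine ⟨f, p, hinj, hiff, hp, fun q hq => ?_⟩
      rcases Finset.mem_insert.1 (hmem q) with h | h
      · exact absurd (hinj (h.trans hp.symm)) hq
      · exact h
    · refine absurd ⟨f, hinj, fun q => ?_, hiff⟩ hno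
      rcases Finset.mem_insert.1 (hmem q) with h | h
      · exact absurd ⟨q, h⟩ hp
      · exact h
  -- F is nonempty.
  have hFne : F.Nonempty := by
    rcases F.eq_empty_or_nonempty with rfl | h
    · obtain ⟨a, b, hab⟩ := exists_pair_ne P
      obtain ⟨f, p, finj, fiff, hfp, hfq⟩ := hins ∅ (by simp)
      rcases eq_or_ne a p with rfl | ha
      · exact absurd (hfq b (fun h => hab h.symm)) (by simp)
      · exact absurd (hfq a ha) (by simp)
    · exact h
  have hsep : ∀ x y : Fin n, x ≠ y → ∃ S ∈ F, Separates S x y := by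
    intro x y hxy
    by_contra hcon
    push_neg at hcon
    have hinv : ∀ A ∈ F, (x ∈ A ↔ y ∈ A) := by
      intro A hA
      have h := hcon A hA
      unfold Separates at h
      constructor <;> intro hm <;> by_contra hm'
      · exact h (Or.inl ⟨hm, hm'⟩)
      · exact h (Or.inr ⟨hm, hm'⟩)
    by_cases hdeg : ∀ A ∈ F, x ∈ A
    · -- degenerate case : every member of F contains both x and y
      have hyA : ∀ A ∈ F, y ∈ A := fun A hA => (hinv A hA).1 (hdeg A hA)
      obtain ⟨M, hM⟩ := hFne
      have hEmpty : (∅ : Finset (Fin n)) ∉ F := fun h => by simpa using hdeg ∅ h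
      obtain ⟨e, p₀, einj, eiff, hep₀, heq⟩ := hins ∅ hEmpty
      have hmin : ∀ q : P, p₀ ≤ q := fun q =>
        (eiff p₀ q).2 (by rw [hep₀]; exact Finset.empty_subset _)
      have hyM : y ∈ M := hyA M hM
      set S : Finset (Fin n) := M.erase y with hSdef
      have hSF : S ∉ F := fun h => (Finset.notMem_erase y M) (hyA _ h)
      obtain ⟨f, p, finj, fiff, hfp, hfq⟩ := hins S hSF
      have hpp₀ : p = p₀ := by
        by_contra hne
        have h1 : f p₀ ∈ F := hfq p₀ (fun h => hne h.symm)
        have h2 : f p₀ ⊆ S := by rw [← hfp]; exact (fiff p₀ p).1 (hmin p)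
        exact Finset.notMem_erase y M (h2 (hyA _ h1))
      have hminp : ∀ q, p ≤ q := by intro q; rw [hpp₀]; exact hmin q
      have hsub : ∀ q, q ≠ p → M ⊆ f q := by
        intro q hq
        have h1 : S ⊆ f q := by rw [← hfp]; exact (fiff p q).1 (hminp q)
        have h2 : y ∈ f q := hyA _ (hfq q hq)
        intro a ha
        rcases eq_or_ne a y with rfl | h
        · exact h2
        · exact h1 (Finset.mem_erase.2 ⟨h, ha⟩)
      by_cases himg : ∃ q₁, f q₁ = M
      · obtain ⟨q₁, hq₁⟩ := himg
        have hq₁p : q₁ ≠ p := by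
          intro h
          rw [h, hfp] at hq₁
          exact Finset.notMem_erase y M (by rw [← hSdef, hq₁]; exact hyM)
        have hq₁min : ∀ q, q ≠ p → q₁ ≤ q := fun q hq =>
          (fiff q₁ q).2 (by rw [hq₁]; exact hsub q hq)
        have hplt : p < q₁ := lt_of_le_of_ne (hminp q₁) (Ne.symm hq₁p)
        have hcov : p ⋖ q₁ :=
          ⟨hplt, fun c hc hc' => absurd (hq₁min c hc.ne') (not_le_of_gt hc')⟩
        have huniq : ∀ T', p ⋖ T' → T' = q₁ := by
          intro T' hT'
          have h1 : q₁ ≤ T' := hq₁min T' hT'.lt.ne'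
          rcases h1.lt_or_eq with h | h
          · exact absurd h (hT'.2 hplt)
          · exact h.symm
        obtain ⟨p', hp'ne, hp'cov⟩ := hP p q₁ hcov huniq
        exact absurd (hq₁min p' hp'ne) (not_le_of_gt hp'cov.lt)
      · push_neg at himg
        refine hno ⟨fun q => if q = p then M else f q, ?_, ?_, ?_⟩
        · intro a b hab
          by_cases ha : a = p <;> by_cases hb : b = p <;> simp [ha, hb] at hab ⊢
          · exact absurd hab.symm (himg b)
          · exact absurd hab (himg a)
          · exact finj hab
        · intro q
          by_cases hq : q = p
          · simpa [hq] using hM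
          · simpa [hq] using hfq q hq
        · intro a b
          by_cases ha : a = p <;> by_cases hb : b = p
          · simp [ha, hb]
          · simp only [ha, hb, if_pos rfl, if_neg hb]
            exact iff_of_true (ha ▸ hminp b) (hsub b hb)
          · simp only [hb, if_pos rfl, if_neg ha]
            constructor
            · intro h
              exact absurd (le_antisymm (hb ▸ h) (hminp a)) ha
            · intro h
              exact absurd (Finset.Subset.antisymm h (hsub a ha)) (himg a)
          · simpa [ha, hb] using fiff a b
    · -- main case : some member of F avoids x (and hence y)
      push_neg at hdeg
      obtain ⟨T₀, hT₀F, hT₀x⟩ := hdeg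
      have hΦne : (F.filter (fun A => x ∉ A)).Nonempty :=
        ⟨T₀, Finset.mem_filter.2 ⟨hT₀F, hT₀x⟩⟩
      obtain ⟨T, hTmem, hTmax⟩ := Finset.exists_max_image _ Finset.card hΦne
      have hTF : T ∈ F := (Finset.mem_filter.1 hTmem).1
      have hTx : x ∉ T := (Finset.mem_filter.1 hTmem).2
      have hTy : y ∉ T := fun h => hTx ((hinv T hTF).2 h)
      set S : Finset (Fin n) := insert x T with hSdef
      have hySnot : y ∉ S := by
        intro h
        rcases Finset.mem_insert.1 h with h | h
        · exact hxy h.symm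
        · exact hTy h
      have hSF : S ∉ F := fun h =>
        hySnot ((hinv S h).1 (Finset.mem_insert_self x T))
      obtain ⟨f, p, finj, fiff, hfp, hfq⟩ := hins S hSF
      have fact1 : ∀ q, q ≠ p → q ≤ p → f q ⊆ T := by
        intro q hq hle
        have h1 : f q ⊆ S := by rw [← hfp]; exact (fiff q p).1 hle
        have hx : x ∉ f q := by
          intro hx
          exact hySnot (h1 ((hinv (f q) (hfq q hq)).1 hx))
        intro a ha
        rcases Finset.mem_insert.1 (h1 ha) with rfl | h
        · exact absurd ha hx
        · exact h
      have factUp : ∀ q, p ≤ q → T ⊆ f q := by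
        intro q h
        have h1 : S ⊆ f q := by rw [← hfp]; exact (fiff p q).1 h
        exact (Finset.subset_insert x T).trans h1
      have claimA : ∀ q, ¬ q ≤ p → ¬ p ≤ q → ¬ T ⊆ f q := by
        intro q h1 h2 hsub
        have hqp : q ≠ p := fun h => h1 (h ▸ le_refl p)
        have hqF : f q ∈ F := hfq q hqp
        have hx : x ∉ f q := by
          intro hx
          refine h2 ((fiff p q).2 ?_)
          rw [hfp]
          intro a ha
          rcases Finset.mem_insert.1 ha with rfl | h
          · exact hx
          · exact hsub h
        have hne : T ≠ f q := by
          intro h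
          refine h1 ((fiff q p).2 ?_)
          rw [hfp, ← h]
          exact Finset.subset_insert x T
        have hss : T ⊂ f q := Finset.ssubset_iff_subset_ne.2 ⟨hsub, hne⟩
        exact absurd (hTmax (f q) (Finset.mem_filter.2 ⟨hqF, hx⟩))
          (not_le_of_gt (Finset.card_lt_card hss))
      by_cases himg : ∃ q₀, q₀ ≠ p ∧ f q₀ = T
      · obtain ⟨q₀, hq₀p, hq₀⟩ := himg
        have hq₀le : q₀ ≤ p := (fiff q₀ p).2 (by rw [hq₀, hfp]; exact Finset.subset_insert x T)
        have hq₀lt : q₀ < p := lt_of_le_of_ne hq₀le hq₀p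
        have habove : ∀ q, q₀ < q → p ≤ q := by
          intro q hlt
          by_cases hqp : q = p
          · rw [hqp]
          have hTs : T ⊆ f q := by rw [← hq₀]; exact (fiff q₀ q).1 hlt.le
          by_cases h1 : q ≤ p
          · have heq : f q = T := Finset.Subset.antisymm (fact1 q hqp h1) hTs
            exact absurd (finj (heq.trans hq₀.symm)) (ne_of_gt hlt)
          · by_cases h2 : p ≤ q
            · exact h2
            · exact absurd hTs (claimA q h1 h2)
        have hcov : q₀ ⋖ p :=
          ⟨hq₀lt, fun c hc hc' => absurd (habove c hc) (not_le_of_gt hc')⟩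
        have huniq : ∀ T', q₀ ⋖ T' → T' = p := by
          intro T' hT'
          have h1 : p ≤ T' := habove T' hT'.lt
          rcases h1.lt_or_eq with h | h
          · exact absurd h (hT'.2 hq₀lt)
          · exact h.symm
        obtain ⟨p', hp'ne, hp'cov⟩ := hP q₀ p hcov huniq
        have hp'lt : p' < p := hp'cov.lt
        have hsub' : f p' ⊆ T := fact1 p' (ne_of_lt hp'lt) hp'lt.le
        have hle : p' ≤ q₀ := (fiff p' q₀).2 (by rw [hq₀]; exact hsub')
        exact absurd hq₀lt (hp'cov.2 (lt_of_le_of_ne hle hp'ne))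
      · push_neg at himg
        refine hno ⟨fun q => if q = p then T else f q, ?_, ?_, ?_⟩
        · intro a b hab
          by_cases ha : a = p <;> by_cases hb : b = p <;> simp [ha, hb] at hab ⊢
          · exact absurd hab.symm (himg b hb)
          · exact absurd hab (himg a ha)
          · exact finj hab
        · intro q
          by_cases hq : q = p
          · simpa [hq] using hTF
          · simpa [hq] using hfq q hq
        · intro a b
          by_cases ha : a = p <;> by_cases hb : b = p
          · simp [ha, hb]
          · -- a = p : p ≤ b ↔ T ⊆ f b
            simp only [ha, hb, if_pos rfl, if_neg hb]
            constructor
            · intro h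
              exact factUp b (ha ▸ h)
            · intro h
              by_cases h1 : b ≤ p
              · exact absurd (Finset.Subset.antisymm (fact1 b hb h1) h) (himg b hb)
              · by_cases h2 : p ≤ b
                · exact h2
                · exact absurd h (claimA b h1 h2)
          · -- b = p : a ≤ p ↔ f a ⊆ T
            simp only [ha, hb, if_pos rfl, if_neg ha]
            constructor
            · intro h
              exact fact1 a ha (hb ▸ h)
            · intro h
              refine (fiff a p).2 ?_
              rw [hfp]
              exact h.trans (Finset.subset_insert x T)
          · simpa [ha, hb] using fiff a b
  refine ⟨hsep, ?_⟩
  have h2 : n ≤ 2 ^ F.card := by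
    have hinj : Set.InjOn (fun x : Fin n => F.filter (fun S => x ∈ S))
        ((Finset.univ : Finset (Fin n)) : Set (Fin n)) := by
      intro a _ b _ hab
      by_contra hne
      obtain ⟨S, hSF, hsp⟩ := hsep a b hne
      have h := Finset.ext_iff.1 hab S
      simp only [Finset.mem_filter] at h
      rcases hsp with ⟨h1, h2⟩ | ⟨h1, h2⟩
      · exact h2 ((h.1 ⟨hSF, h1⟩).2)
      · exact h2 ((h.2 ⟨hSF, h1⟩).2)
    calc n = (Finset.univ : Finset (Fin n)).card := by simp
    _ ≤ F.powerset.card := Finset.card_le_card_of_injOn _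
        (fun x _ => Finset.mem_powerset.2 (Finset.filter_subset _ _)) hinj
    _ = 2 ^ F.card := Finset.card_powerset F
  exact (Nat.clog_le_iff_le_pow (by norm_num)).2 h2
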